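/- If Ψ is a real diagonal m-order n-dimensional tensor with diagonal entries a_{k⋯k}, then every Q-eigenvalue λ of Ψ satisfies |λ| ≤ max_k |a_{k⋯k}|. -/

import Mathlib

open Finset

noncomputable section

/-- Contraction `T z^m` of an `(m+1)`-order tensor with entries in `ℂ`. -/
def tapplyC {m : ℕ} {ι : Type} [Fintype ι] (T : (Fin (m + 1) → ι) → ℂ)
    (z : ι → ℂ) : ι → ℂ :=
  fun i => ∑ f : Fin m → ι, T (Fin.cons i f) * ∏ j, z (f j)

/-- Contraction `T x^m` of an `(m+1)`-order tensor with entries in `ℝ`. -/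
def tapplyR {m : ℕ} {ι : Type} [Fintype ι] (T : (Fin (m + 1) → ι) → ℝ)
    (x : ι → ℝ) : ι → ℝ :=
  fun i => ∑ f : Fin m → ι, T (Fin.cons i f) * ∏ j, x (f j)

/-- A tensor is symmetric if its entries are invariant under index permutations. -/
def SymmT {m : ℕ} {ι R : Type} (T : (Fin m → ι) → R) : Prop :=
  ∀ (σ : Equiv.Perm (Fin m)) (f : Fin m → ι), T (f ∘ σ) = T f

/-- `lam` is a Q-eigenvalue of the complex tensor `T` with Q-eigenvector `z`:
`T z^{m} = lam * conj z` and `z̄ᵀ z = 1`. -/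
def IsQEig {m : ℕ} {ι : Type} [Fintype ι] (T : (Fin (m + 1) → ι) → ℂ)
    (lam : ℝ) (z : ι → ℂ) : Prop :=
  tapplyC T z = (fun i => (lam : ℂ) * (starRingEnd ℂ) (z i)) ∧
    ∑ i, (starRingEnd ℂ) (z i) * z i = 1

/-- `lam` is a Z-eigenvalue of the real tensor `T` with Z-eigenvector `x`. -/
def IsZEig {m : ℕ} {ι : Type} [Fintype ι] (T : (Fin (m + 1) → ι) → ℝ)
    (lam : ℝ) (x : ι → ℝ) : Prop :=
  tapplyR T x = (fun i => lam * x i) ∧ ∑ i, x i ^ 2 = 1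

/-- Complexification of a real tensor. -/
def toC {m : ℕ} {ι : Type} (T : (Fin (m + 1) → ι) → ℝ) :
    (Fin (m + 1) → ι) → ℂ := fun f => ((T f : ℝ) : ℂ)

/-- The entanglement eigenvalue of a real tensor: largest Q-eigenvalue. -/
def QmaxR {m : ℕ} {ι : Type} [Fintype ι] (T : (Fin (m + 1) → ι) → ℝ) : ℝ :=
  sSup {lam : ℝ | ∃ z : ι → ℂ, IsQEig (toC T) lam z}

/-- The Z-spectral radius of a real tensor: largest `|λ|` over Z-eigenvalues. -/
def Zrad {m : ℕ} {ι : Type} [Fintype ι] (T : (Fin (m + 1) → ι) → ℝ) : ℝ :=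
  sSup {r : ℝ | ∃ (lam : ℝ) (x : ι → ℝ), IsZEig T lam x ∧ r = |lam|}

/-- Frobenius norm of a real tensor. -/
def fnorm {m : ℕ} {ι : Type} [Fintype ι] (T : (Fin m → ι) → ℝ) : ℝ :=
  Real.sqrt (∑ f : Fin m → ι, T f ^ 2)

/-- Q-eigenvalues of a real diagonal tensor are bounded by the largest
absolute diagonal entry. -/
theorem diagonal_tensor_Qeig_bound {m n : ℕ} (hm : 1 ≤ m) (hn : 0 < n)
    (Ψ : (Fin (m + 1) → Fin n) → ℝ)
    (hdiag : ∀ f : Fin (m + 1) → Fin n, (¬ ∀ t, f t = f 0) → Ψ f = 0)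
    (lam : ℝ) (z : Fin n → ℂ) (h : IsQEig (toC Ψ) lam z) :
    |lam| ≤ Finset.univ.sup' ⟨⟨0, hn⟩, Finset.mem_univ _⟩
      (fun k => |Ψ (fun _ => k)|) := by
  obtain ⟨heq, hnorm⟩ := h
  set M := Finset.univ.sup' ⟨⟨0, hn⟩, Finset.mem_univ _⟩
      (fun k => |Ψ (fun _ => k)|) with hMdef
  have hMb : ∀ i : Fin n, |Ψ (fun _ => i)| ≤ M := by
    intro i; rw [hMdef]
    exact Finset.le_sup' (fun k => |Ψ (fun _ => k)|) (Finset.mem_univ i)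
  have hM0 : 0 ≤ M := le_trans (abs_nonneg _) (hMb ⟨0, hn⟩)
  -- key pointwise identity
  have key : ∀ i, (lam : ℂ) * (starRingEnd ℂ) (z i)
      = (Ψ (fun _ => i) : ℂ) * (z i) ^ m := by
    intro i
    have hi := congrFun heq i
    rw [← hi]
    unfold tapplyC toC
    rw [Finset.sum_eq_single (fun _ : Fin m => i)]
    · have hc : (Fin.cons i (fun _ : Fin m => i)) = fun _ => i := by
        funext t
        refine Fin.cases ?_ ?_ t
        · simp
        · intro j; simp
      rw [hc]
      simp [Finset.prod_const]
    · intro f _ hf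
      rw [hdiag, Complex.ofReal_zero, zero_mul]
      intro hall
      apply hf
      funext j
      have := hall j.succ
      simpa using this
    · simp
  set r : Fin n → ℝ := fun i => ‖z i‖ with hrdef
  have hrnn : ∀ i, 0 ≤ r i := fun i => norm_nonneg _
  have hr : ∀ i, |lam| * r i = |Ψ (fun _ => i)| * r i ^ m := by
    intro i
    have := congrArg (fun w : ℂ => ‖w‖) (key i)
    simpa [norm_mul, norm_pow, Complex.norm_conj, Complex.norm_real] using this
  have hsum : ∑ i, r i ^ 2 = 1 := by
    have h2 : ((∑ i, r i ^ 2 : ℝ) : ℂ) = 1 := by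
      push_cast
      rw [← hnorm]
      apply Finset.sum_congr rfl
      intro i _
      rw [hrdef, ← Complex.ofReal_pow, Complex.sq_norm,
        Complex.normSq_eq_conj_mul_self]
    exact_mod_cast h2
  have hrle : ∀ i, r i ≤ 1 := by
    intro i
    have h2 : r i ^ 2 ≤ 1 := by
      rw [← hsum]
      exact Finset.single_le_sum (fun j _ => sq_nonneg (r j)) (Finset.mem_univ i)
    nlinarith [hrnn i]
  have h1 : |lam| = ∑ i, |Ψ (fun _ => i)| * r i ^ (m + 1) := by
    calc |lam| = ∑ i, |lam| * r i ^ 2 := by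
          rw [← Finset.mul_sum, hsum, mul_one]
      _ = ∑ i, (|lam| * r i) * r i := by
          apply Finset.sum_congr rfl; intro i _; ring
      _ = ∑ i, (|Ψ (fun _ => i)| * r i ^ m) * r i := by
          apply Finset.sum_congr rfl; intro i _; rw [hr]
      _ = ∑ i, |Ψ (fun _ => i)| * r i ^ (m + 1) := by
          apply Finset.sum_congr rfl; intro i _; ring
  rw [h1]
  calc ∑ i, |Ψ (fun _ => i)| * r i ^ (m + 1)
      ≤ ∑ i, M * r i ^ 2 := by
        apply Finset.sum_le_sum
        intro i _
        apply mul_le_mul (hMb i) ?_ (pow_nonneg (hrnn i) _) hM0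
        exact pow_le_pow_of_le_one (hrnn i) (hrle i) (by omega)
    _ = M := by rw [← Finset.mul_sum, hsum, mul_one]
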